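/- Every digital Jordan curve in the Khalimsky plane consists of an even number of points. -/

import Mathlib

open Set

/-- The minimal open neighborhood of a point in a topological space. -/
def minOpenNhd {X : Type*} (t : TopologicalSpace X) (x : X) : Set X :=
  ⋂₀ {U : Set X | t.IsOpen U ∧ x ∈ U}

/-- The specialization-style preorder: `x ≤ y` iff `U_x ⊆ U_y`. -/
def specLE {X : Type*} (t : TopologicalSpace X) (x y : X) : Prop :=
  minOpenNhd t x ⊆ minOpenNhd t y

/-- Two points are adjacent if distinct and comparable in the specialization order. -/
def Adjacent {X : Type*} (t : TopologicalSpace X) (x y : X) : Prop :=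
  x ≠ y ∧ (specLE t x y ∨ specLE t y x)

/-- The adjacency set of a point. -/
def adjSet {X : Type*} (t : TopologicalSpace X) (x : X) : Set X := {y | Adjacent t x y}

/-- A COTS: a connected space in which every 3-point subset has a point separating
the other two. -/
def IsCOTS {X : Type*} (t : TopologicalSpace X) : Prop :=
  @ConnectedSpace X t ∧
    ∀ Y : Set X, Y.ncard = 3 →
      ∃ y ∈ Y, ∃ a ∈ Y \ {y}, ∃ b ∈ Y \ {y},
        @connectedComponentIn X t {y}ᶜ a ≠ @connectedComponentIn X t {y}ᶜ b

/-- An endpoint of a COTS: a point with at most one neighbor. -/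
def IsEndpoint {X : Type*} (t : TopologicalSpace X) (x : X) : Prop :=
  (adjSet t x).ncard ≤ 1

/-- A COTS-path: the continuous image of a finite COTS. -/
def IsCOTSPath {Y : Type*} (tY : TopologicalSpace Y) (P : Set Y) : Prop :=
  ∃ (C : Type) (tC : TopologicalSpace C), Finite C ∧ IsCOTS tC ∧
    ∃ f : C → Y, @Continuous C Y tC tY f ∧ Set.range f = P

/-- A COTS-path with prescribed start and end points. -/
def IsCOTSPathFromTo {Y : Type*} (tY : TopologicalSpace Y) (P : Set Y) (a b : Y) : Prop :=
  ∃ (C : Type) (tC : TopologicalSpace C), Finite C ∧ IsCOTS tC ∧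
    ∃ f : C → Y, @Continuous C Y tC tY f ∧ Set.range f = P ∧
      ∃ c₀ c₁ : C, IsEndpoint tC c₀ ∧ IsEndpoint tC c₁ ∧ f c₀ = a ∧ f c₁ = b

/-- A COTS-arc: the homeomorphic image of a finite COTS. -/
def IsCOTSArc {Y : Type*} (tY : TopologicalSpace Y) (A : Set Y) : Prop :=
  ∃ (C : Type) (tC : TopologicalSpace C), Finite C ∧ IsCOTS tC ∧
    ∃ f : C → Y, @Topology.IsEmbedding C Y tC tY f ∧ Set.range f = A

/-- A COTS-arc with prescribed endpoints. -/
def IsCOTSArcFromTo {Y : Type*} (tY : TopologicalSpace Y) (A : Set Y) (a b : Y) : Prop :=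
  ∃ (C : Type) (tC : TopologicalSpace C), Finite C ∧ IsCOTS tC ∧
    ∃ f : C → Y, @Topology.IsEmbedding C Y tC tY f ∧ Set.range f = A ∧
      ∃ c₀ c₁ : C, IsEndpoint tC c₀ ∧ IsEndpoint tC c₁ ∧ f c₀ = a ∧ f c₁ = b

/-- The COTS-distance: one less than the minimal cardinality of a COTS-arc
joining two points (`⊤` if there is no such arc). -/
noncomputable def cotsDist {X : Type*} (t : TopologicalSpace X) (x y : X) : ℕ∞ :=
  sInf {n : ℕ∞ | ∃ A : Set X, IsCOTSArcFromTo t A x y ∧ (A.ncard : ℕ∞) = n + 1}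

/-- The Khalimsky topology on ℤ. -/
def khal : TopologicalSpace ℤ :=
  TopologicalSpace.generateFrom
    {s : Set ℤ | ∃ n : ℤ, (Odd n ∧ s = {n}) ∨ (Even n ∧ s = {n - 1, n, n + 1})}

/-- The Khalimsky plane topology on ℤ × ℤ. -/
def khalPlane : TopologicalSpace (ℤ × ℤ) := @instTopologicalSpaceProd ℤ ℤ khal khal

/-- A point of the Khalimsky plane is pure if its coordinates have the same parity. -/
def IsPurePt (p : ℤ × ℤ) : Prop := (Even p.1 ∧ Even p.2) ∨ (Odd p.1 ∧ Odd p.2)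

/-- A digital Jordan curve: a finite set of at least 4 points such that removing
any point leaves a COTS-arc. -/
def IsJordanCurve {X : Type*} (t : TopologicalSpace X) (J : Set X) : Prop :=
  J.Finite ∧ 4 ≤ J.ncard ∧ ∀ j ∈ J, IsCOTSArc t (J \ {j})

/-- The interior of a digital Jordan curve in the Khalimsky plane: the union of the
finite (bounded) connected components of its complement. -/
def jInterior (J : Set (ℤ × ℤ)) : Set (ℤ × ℤ) :=
  ⋃₀ {S | ∃ p ∉ J, S = @connectedComponentIn _ khalPlane Jᶜ p ∧ S.Finite}

/- ### Auxiliary lemmas -/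

section Aux

lemma mem_minOpenNhd_self {X : Type*} (t : TopologicalSpace X) (x : X) :
    x ∈ minOpenNhd t x := fun _ hU => hU.2

lemma minOpenNhd_subset {X : Type*} (t : TopologicalSpace X) {x : X} {U : Set X}
    (hU : t.IsOpen U) (hx : x ∈ U) : minOpenNhd t x ⊆ U :=
  sInter_subset_of_mem ⟨hU, hx⟩

lemma specLE_of_mem {X : Type*} (t : TopologicalSpace X) {x y : X}
    (hopen : t.IsOpen (minOpenNhd t y)) (hx : x ∈ minOpenNhd t y) : specLE t x y :=
  minOpenNhd_subset t hopen hx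

lemma mem_of_specLE {X : Type*} {t : TopologicalSpace X} {x y : X}
    (h : specLE t x y) : x ∈ minOpenNhd t y := h (mem_minOpenNhd_self t x)

lemma specLE_trans {X : Type*} {t : TopologicalSpace X} {x y z : X}
    (h1 : specLE t x y) (h2 : specLE t y z) : specLE t x z := h1.trans h2

lemma adjacent_symm {X : Type*} {t : TopologicalSpace X} {x y : X}
    (h : Adjacent t x y) : Adjacent t y x := ⟨h.1.symm, h.2.symm⟩

lemma minOpenNhd_isOpen_of_finite {X : Type*} [Finite X] (t : TopologicalSpace X) (x : X) :
    t.IsOpen (minOpenNhd t x) := by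
  letI := t
  exact Set.Finite.isOpen_sInter (Set.toFinite _) (fun U hU => hU.1)

/- ### The Khalimsky line and plane -/

/-- minimal nhd candidate in the Khalimsky line -/
def kNhd (n : ℤ) : Set ℤ := if Even n then {n - 1, n, n + 1} else {n}

lemma mem_kNhd_self (n : ℤ) : n ∈ kNhd n := by
  unfold kNhd; split <;> simp

lemma kNhd_isOpen (n : ℤ) : khal.IsOpen (kNhd n) := by
  unfold kNhd
  split
  · exact TopologicalSpace.isOpen_generateFrom_of_mem ⟨n, Or.inr ⟨‹_›, rfl⟩⟩
  · exact TopologicalSpace.isOpen_generateFrom_of_mem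
      ⟨n, Or.inl ⟨Int.not_even_iff_odd.mp ‹_›, rfl⟩⟩

lemma kNhd_subset {U : Set ℤ} (hU : khal.IsOpen U) {n : ℤ} (hn : n ∈ U) :
    kNhd n ⊆ U := by
  induction hU with
  | basic s hs =>
    obtain ⟨m, hm | hm⟩ := hs
    · rw [hm.2] at hn ⊢
      simp only [mem_singleton_iff] at hn; subst hn
      have : ¬ Even n := Int.not_even_iff_odd.mpr hm.1
      simp [kNhd, this]
    · rw [hm.2] at hn ⊢
      have hme := hm.1
      rcases Int.even_or_odd n with he | ho
      · have : n = m := by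
          simp only [mem_insert_iff, mem_singleton_iff] at hn
          rcases Int.even_iff.mp he with h2
          rcases Int.even_iff.mp hme with h3
          omega
        subst this; simp [kNhd, he]
      · have : ¬ Even n := Int.not_even_iff_odd.mpr ho
        simp only [kNhd, this, if_false]
        intro x hx; simp only [mem_singleton_iff] at hx; subst hx; exact hn
  | univ => exact subset_univ _
  | inter s t _ _ ihs iht => exact subset_inter (ihs hn.1) (iht hn.2)
  | sUnion S _ ih =>
    obtain ⟨s, hsS, hns⟩ := hn
    exact (ih s hsS hns).trans (subset_sUnion_of_mem hsS)

lemma minOpenNhd_khalPlane (p : ℤ × ℤ) :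
    minOpenNhd khalPlane p = kNhd p.1 ×ˢ kNhd p.2 := by
  apply Subset.antisymm
  · apply sInter_subset_of_mem
    refine ⟨?_, mem_kNhd_self p.1, mem_kNhd_self p.2⟩
    exact @IsOpen.prod ℤ ℤ khal khal _ _ (kNhd_isOpen p.1) (kNhd_isOpen p.2)
  · intro q hq U hU
    obtain ⟨hUopen, hpU⟩ := hU
    obtain ⟨u, v, hu, hv, h1, h2, huv⟩ :=
      (@isOpen_prod_iff ℤ ℤ khal khal U).mp hUopen p.1 p.2 hpU
    exact huv ⟨kNhd_subset hu h1 hq.1, kNhd_subset hv h2 hq.2⟩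

lemma khalPlane_minOpenNhd_isOpen (p : ℤ × ℤ) :
    khalPlane.IsOpen (minOpenNhd khalPlane p) := by
  rw [minOpenNhd_khalPlane]
  exact @IsOpen.prod ℤ ℤ khal khal _ _ (kNhd_isOpen p.1) (kNhd_isOpen p.2)

lemma kNhd_antisymm {a b : ℤ} (h1 : a ∈ kNhd b) (h2 : b ∈ kNhd a) : a = b := by
  unfold kNhd at h1 h2
  rcases Int.even_or_odd a with ha | ha <;> rcases Int.even_or_odd b with hb | hb
  · rw [if_pos hb] at h1
    have := Int.even_iff.mp ha; have := Int.even_iff.mp hb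
    simp only [mem_insert_iff, mem_singleton_iff] at h1
    omega
  · rw [if_neg (Int.not_even_iff_odd.mpr hb)] at h1
    simpa using h1
  · rw [if_pos hb] at h1
    rw [if_neg (Int.not_even_iff_odd.mpr ha)] at h2
    simp only [mem_singleton_iff] at h2
    have := Int.odd_iff.mp ha; have := Int.even_iff.mp hb
    omega
  · rw [if_neg (Int.not_even_iff_odd.mpr hb)] at h1
    simpa using h1

lemma specLE_plane_antisymm {x y : ℤ × ℤ} (h1 : specLE khalPlane x y)
    (h2 : specLE khalPlane y x) : x = y := by
  have hx := mem_of_specLE h1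
  have hy := mem_of_specLE h2
  rw [minOpenNhd_khalPlane] at hx hy
  exact Prod.ext (kNhd_antisymm hx.1 hy.1) (kNhd_antisymm hx.2 hy.2)

/- ### Transfer through embeddings -/

lemma minOpenNhd_induced {C X : Type*} (tX : TopologicalSpace X) (f : C → X) (a : C) :
    minOpenNhd (tX.induced f) a = f ⁻¹' minOpenNhd tX (f a) := by
  apply Subset.antisymm
  · intro z hz V hV
    exact hz (f ⁻¹' V) ⟨⟨V, hV.1, rfl⟩, hV.2⟩
  · intro z hz W hW
    obtain ⟨⟨V, hVopen, rfl⟩, haW⟩ := hW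
    exact minOpenNhd_subset tX hVopen haW hz

lemma specLE_induced_iff {C X : Type*} (tX : TopologicalSpace X) (f : C → X)
    (hopen : ∀ x : X, tX.IsOpen (minOpenNhd tX x)) (a b : C) :
    specLE (tX.induced f) a b ↔ specLE tX (f a) (f b) := by
  unfold specLE
  rw [minOpenNhd_induced, minOpenNhd_induced]
  constructor
  · intro h
    have ha : a ∈ f ⁻¹' minOpenNhd tX (f a) :=
      Set.mem_preimage.mpr (mem_minOpenNhd_self tX (f a))
    exact specLE_of_mem tX (hopen _) (Set.mem_preimage.mp (h ha))
  · exact fun h => Set.preimage_mono h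

lemma adjacent_emb {C : Type*} (tC : TopologicalSpace C) (f : C → ℤ × ℤ)
    (hemb : @Topology.IsEmbedding C (ℤ × ℤ) tC khalPlane f) (a b : C) :
    Adjacent tC a b ↔ Adjacent khalPlane (f a) (f b) := by
  have hind : tC = khalPlane.induced f :=
    @Topology.IsInducing.eq_induced C (ℤ × ℤ) tC khalPlane f
      (@Topology.IsEmbedding.toIsInducing C (ℤ × ℤ) tC khalPlane f hemb)
  have hinj : Function.Injective f :=
    @Topology.IsEmbedding.injective C (ℤ × ℤ) tC khalPlane f hemb
  have hs : ∀ u v : C, specLE tC u v ↔ specLE khalPlane (f u) (f v) := by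
    intro u v
    rw [hind]
    exact specLE_induced_iff khalPlane f khalPlane_minOpenNhd_isOpen u v
  unfold Adjacent
  simp only [hs]
  constructor
  · rintro ⟨hne, h⟩; exact ⟨fun he => hne (hinj he), h⟩
  · rintro ⟨hne, h⟩; exact ⟨fun he => hne (congrArg f he), h⟩

/- ### Structure of finite COTSs -/

lemma pair_preconnected {C : Type*} (tC : TopologicalSpace C) {a b : C}
    (h : specLE tC a b) : @IsPreconnected C tC {a, b} := by
  letI := tC
  have hspec : a ⤳ b := by
    rw [specializes_iff_forall_open]
    intro s hs hbs
    exact mem_of_specLE h s ⟨hs, hbs⟩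
  have hcl : b ∈ closure {a} := hspec.mem_closure
  have hsub : ({a, b} : Set C) ⊆ closure {a} := by
    intro z hz; rcases hz with rfl | rfl
    · exact subset_closure rfl
    · exact hcl
  exact isPreconnected_singleton.subset_closure (by simp) hsub

lemma adj_pair_preconnected {C : Type*} (tC : TopologicalSpace C) {a b : C}
    (h : Adjacent tC a b) : @IsPreconnected C tC {a, b} := by
  rcases h.2 with h' | h'
  · exact pair_preconnected tC h'
  · rw [Set.pair_comm]; exact pair_preconnected tC h'

lemma cots_no_three {C : Type*} (tC : TopologicalSpace C) (hc : IsCOTS tC)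
    {x a b c : C} (hab : a ≠ b) (hac : a ≠ c) (hbc : b ≠ c)
    (h1 : Adjacent tC x a) (h2 : Adjacent tC x b) (h3 : Adjacent tC x c) : False := by
  letI := tC
  have hY : ({a, b, c} : Set C).ncard = 3 := Set.ncard_eq_three.mpr ⟨a, b, c, hab, hac, hbc, rfl⟩
  obtain ⟨y, hy, p, hp, q, hq, hne⟩ := hc.2 {a, b, c} hY
  have hadj : ∀ z ∈ ({a, b, c} : Set C), Adjacent tC x z := by
    intro z hz
    rcases hz with rfl | rfl | rfl <;> assumption
  have hxy : x ≠ y := (hadj y hy).1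
  apply hne
  have key : ∀ r, r ∈ ({a, b, c} : Set C) \ {y} →
      connectedComponentIn ({y}ᶜ : Set C) r = connectedComponentIn ({y}ᶜ : Set C) x := by
    intro r hr
    have hpre : IsPreconnected ({x, r} : Set C) := adj_pair_preconnected tC (hadj r hr.1)
    have hsub : ({x, r} : Set C) ⊆ {y}ᶜ := by
      intro z hz; rcases hz with rfl | rfl
      · simpa using hxy
      · simpa using hr.2
    have hss := hpre.subset_connectedComponentIn (show r ∈ ({x, r} : Set C) by simp) hsub
    exact connectedComponentIn_eq (hss (by simp))
  rw [key p hp, key q hq]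

lemma cots_no_triangle {C : Type*} (tC : TopologicalSpace C) (hc : IsCOTS tC)
    {a b c : C} (hab : a ≠ b) (hac : a ≠ c) (hbc : b ≠ c)
    (h1 : Adjacent tC a b) (h2 : Adjacent tC a c) (h3 : Adjacent tC b c) : False := by
  letI := tC
  have hY : ({a, b, c} : Set C).ncard = 3 := Set.ncard_eq_three.mpr ⟨a, b, c, hab, hac, hbc, rfl⟩
  obtain ⟨y, hy, p, hp, q, hq, hne⟩ := hc.2 {a, b, c} hY
  apply hne
  have hpq : p ≠ q := by rintro rfl; exact hne rfl
  have hadjpq : Adjacent tC p q := by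
    have hmem : ∀ u v : C, u ∈ ({a,b,c} : Set C) → v ∈ ({a,b,c} : Set C) → u ≠ v →
        Adjacent tC u v := by
      intro u v hu hv huv
      rcases hu with rfl | rfl | rfl <;> rcases hv with rfl | rfl | rfl <;>
        first
          | exact absurd rfl huv
          | assumption
          | exact adjacent_symm ‹_›
    exact hmem p q hp.1 hq.1 hpq
  have hpre : IsPreconnected ({p, q} : Set C) := adj_pair_preconnected tC hadjpq
  have hsub : ({p, q} : Set C) ⊆ {y}ᶜ := by
    intro z hz; rcases hz with rfl | rfl
    · simpa using hp.2
    · simpa using hq.2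
  have hss := hpre.subset_connectedComponentIn (show p ∈ ({p, q} : Set C) by simp) hsub
  exact connectedComponentIn_eq (hss (by simp))

lemma cots_no_isolated {C : Type*} [Finite C] (tC : TopologicalSpace C)
    (hconn : @ConnectedSpace C tC) {x z : C} (hz : z ≠ x)
    (h0 : ∀ w : C, ¬ Adjacent tC x w) : False := by
  letI := tC
  have hUx : minOpenNhd tC x = {x} := by
    apply Subset.antisymm
    · intro w hw
      by_contra hwx
      simp only [mem_singleton_iff] at hwx
      exact h0 w ⟨fun h => hwx h.symm, Or.inr (specLE_of_mem tC
        (minOpenNhd_isOpen_of_finite tC x) hw)⟩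
    · intro w hw; simp only [mem_singleton_iff] at hw
      rw [hw]; exact mem_minOpenNhd_self tC x
  have hopen : IsOpen ({x} : Set C) := hUx ▸ minOpenNhd_isOpen_of_finite tC x
  have hclosed : IsClosed ({x} : Set C) := by
    apply isClosed_of_closure_subset
    intro w hw
    have hxw : x ∈ minOpenNhd tC w := by
      rcases mem_closure_iff.mp hw (minOpenNhd tC w)
        (minOpenNhd_isOpen_of_finite tC w) (mem_minOpenNhd_self tC w) with ⟨u, hu1, hu2⟩
      simp only [mem_singleton_iff] at hu2; subst hu2; exact hu1
    by_contra hwx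
    simp only [mem_singleton_iff] at hwx
    exact h0 w ⟨fun h => hwx h.symm, Or.inl (specLE_of_mem tC
      (minOpenNhd_isOpen_of_finite tC w) hxw)⟩
  have huniv : ({x} : Set C) = univ := by
    rcases isClopen_iff.mp ⟨hclosed, hopen⟩ with h | h
    · exact absurd h (by simp)
    · exact h
  have : z ∈ ({x} : Set C) := huniv ▸ mem_univ z
  exact hz (by simpa using this)

/- ### Structure of COTS-arcs in the Khalimsky plane -/

lemma arc_no_three {A : Set (ℤ × ℤ)} (hA : IsCOTSArc khalPlane A)
    {x a b c : ℤ × ℤ} (hx : x ∈ A) (ha : a ∈ A) (hb : b ∈ A) (hc : c ∈ A)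
    (hab : a ≠ b) (hac : a ≠ c) (hbc : b ≠ c)
    (h1 : Adjacent khalPlane x a) (h2 : Adjacent khalPlane x b)
    (h3 : Adjacent khalPlane x c) : False := by
  obtain ⟨C, tC, hfinC, hcots, f, hemb, hrange⟩ := hA
  rw [← hrange] at hx ha hb hc
  obtain ⟨x', rfl⟩ := hx; obtain ⟨a', rfl⟩ := ha
  obtain ⟨b', rfl⟩ := hb; obtain ⟨c', rfl⟩ := hc
  have hiff := adjacent_emb tC f hemb
  exact cots_no_three tC hcots (fun h => hab (congrArg f h)) (fun h => hac (congrArg f h))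
    (fun h => hbc (congrArg f h)) ((hiff _ _).mpr h1) ((hiff _ _).mpr h2) ((hiff _ _).mpr h3)

lemma arc_no_triangle {A : Set (ℤ × ℤ)} (hA : IsCOTSArc khalPlane A)
    {a b c : ℤ × ℤ} (ha : a ∈ A) (hb : b ∈ A) (hc : c ∈ A)
    (hab : a ≠ b) (hac : a ≠ c) (hbc : b ≠ c)
    (h1 : Adjacent khalPlane a b) (h2 : Adjacent khalPlane a c)
    (h3 : Adjacent khalPlane b c) : False := by
  obtain ⟨C, tC, hfinC, hcots, f, hemb, hrange⟩ := hA
  rw [← hrange] at ha hb hc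
  obtain ⟨a', rfl⟩ := ha; obtain ⟨b', rfl⟩ := hb; obtain ⟨c', rfl⟩ := hc
  have hiff := adjacent_emb tC f hemb
  exact cots_no_triangle tC hcots (fun h => hab (congrArg f h)) (fun h => hac (congrArg f h))
    (fun h => hbc (congrArg f h)) ((hiff _ _).mpr h1) ((hiff _ _).mpr h2) ((hiff _ _).mpr h3)

lemma arc_no_isolated {A : Set (ℤ × ℤ)} (hA : IsCOTSArc khalPlane A)
    {x z : ℤ × ℤ} (hx : x ∈ A) (hz : z ∈ A) (hzx : z ≠ x)
    (h0 : ∀ w ∈ A, ¬ Adjacent khalPlane x w) : False := by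
  obtain ⟨C, tC, hfinC, hcots, f, hemb, hrange⟩ := hA
  haveI := hfinC
  rw [← hrange] at hx hz
  obtain ⟨x', rfl⟩ := hx; obtain ⟨z', rfl⟩ := hz
  exact cots_no_isolated tC hcots.1 (fun h => hzx (congrArg f h))
    (fun w hw => h0 (f w) (hrange ▸ mem_range_self w) ((adjacent_emb tC f hemb x' w).mp hw))

end Aux
/-- Every digital Jordan curve in the Khalimsky plane has an even number of points. -/
theorem stmt13 (J : Set (ℤ × ℤ)) (h : IsJordanCurve khalPlane J) :
    Even J.ncard := by
  classical
  obtain ⟨hfin, hcard, harc⟩ := h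
  by_cases h5 : J.ncard ≤ 4
  · have h4 : J.ncard = 4 := le_antisymm h5 hcard
    rw [h4]; exact ⟨2, rfl⟩
  push_neg at h5
  -- J contains no triangle
  have htri : ∀ a ∈ J, ∀ b ∈ J, ∀ c ∈ J, a ≠ b → a ≠ c → b ≠ c →
      Adjacent khalPlane a b → Adjacent khalPlane a c → Adjacent khalPlane b c → False := by
    intro a ha b hb c hc hab hac hbc h1 h2 h3
    have hsub : ¬ J ⊆ {a, b, c} := by
      intro hsubs
      have hle := Set.ncard_le_ncard hsubs (Set.toFinite _)
      have h3' : ({a, b, c} : Set (ℤ × ℤ)).ncard ≤ 3 := by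
        refine le_trans (Set.ncard_insert_le _ _) ?_
        have := Set.ncard_insert_le b ({c} : Set (ℤ × ℤ))
        simp only [Set.ncard_singleton] at this
        omega
      omega
    obtain ⟨d, hdJ, hd⟩ := not_subset.mp hsub
    simp only [mem_insert_iff, mem_singleton_iff, not_or] at hd
    have hmem : ∀ u : ℤ × ℤ, u ∈ J → u ≠ d → u ∈ J \ {d} := by
      intro u hu hud; exact ⟨hu, by simp [hud]⟩
    exact arc_no_triangle (harc d hdJ)
      (hmem a ha (fun h => hd.1 h.symm))
      (hmem b hb (fun h => hd.2.1 h.symm))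
      (hmem c hc (fun h => hd.2.2 h.symm))
      hab hac hbc h1 h2 h3
  -- the set of neighbours of x inside J
  set N : (ℤ × ℤ) → Set (ℤ × ℤ) := fun x => {y ∈ J | Adjacent khalPlane x y} with hN
  have hNfin : ∀ x, (N x).Finite := fun x => hfin.subset (sep_subset _ _)
  have hNsub : ∀ x, N x ⊆ J := fun x => sep_subset _ _
  -- every point of J has exactly two neighbours in J
  have hdeg : ∀ x ∈ J, (N x).ncard = 2 := by
    intro x hx
    have hle : (N x).ncard ≤ 2 := by
      by_contra hgt
      push_neg at hgt
      obtain ⟨a, ha⟩ : (N x).Nonempty := Set.nonempty_of_ncard_ne_zero (by omega)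
      have h2 : 1 < ((N x) \ {a}).ncard := by
        rw [Set.ncard_diff_singleton_of_mem ha]; omega
      obtain ⟨b, hb, hba⟩ := Set.exists_ne_of_one_lt_ncard h2 a
      have h3' : (((N x) \ {a}) \ {b}).ncard ≠ 0 := by
        rw [Set.ncard_diff_singleton_of_mem hb,
          Set.ncard_diff_singleton_of_mem ha]
        omega
      obtain ⟨c, hc⟩ := Set.nonempty_of_ncard_ne_zero h3'
      have hcb : c ≠ b := by have := hc.2; simpa using this
      have haN : a ∈ N x := ha
      have hbN : b ∈ N x := hb.1
      have hcN : c ∈ N x := hc.1.1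
      have hca : c ≠ a := by
        have := hc.1.2; simpa using this
      -- a point d of J different from x, a, b, c
      have hsub : ¬ J ⊆ {x, a, b, c} := by
        intro hsubs
        have hle' := Set.ncard_le_ncard hsubs (Set.toFinite _)
        have h4' : ({x, a, b, c} : Set (ℤ × ℤ)).ncard ≤ 4 := by
          refine le_trans (Set.ncard_insert_le _ _) ?_
          have i1 := Set.ncard_insert_le a ({b, c} : Set (ℤ × ℤ))
          have i2 := Set.ncard_insert_le b ({c} : Set (ℤ × ℤ))
          simp only [Set.ncard_singleton] at i2
          omega
        omega
      obtain ⟨d, hdJ, hd⟩ := not_subset.mp hsub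
      simp only [mem_insert_iff, mem_singleton_iff, not_or] at hd
      have hmem : ∀ u : ℤ × ℤ, u ∈ J → u ≠ d → u ∈ J \ {d} := by
        intro u hu hud; exact ⟨hu, by simp [hud]⟩
      exact arc_no_three (harc d hdJ)
        (hmem x hx (fun h => hd.1 h.symm))
        (hmem a (hNsub x haN) (fun h => hd.2.1 h.symm))
        (hmem b (hNsub x hbN) (fun h => hd.2.2.1 h.symm))
        (hmem c (hNsub x hcN) (fun h => hd.2.2.2 h.symm))
        hba.symm hca.symm hcb.symm haN.2 hbN.2 hcN.2
    have hge : ¬ (N x).ncard ≤ 1 := by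
      intro hle1
      rcases Set.eq_empty_or_nonempty (N x) with hemp | ⟨a, ha⟩
      · -- x would be isolated in J \ {d} for any d ≠ x
        obtain ⟨d, hdJ, hdx⟩ := Set.exists_ne_of_one_lt_ncard (by omega : 1 < J.ncard) x
        have hxd' : x ≠ d := fun h => hdx h.symm
        have hxd : x ∈ J \ {d} := ⟨hx, by simp [hxd']⟩
        have hz : 1 < (J \ {d}).ncard := by
          rw [Set.ncard_diff_singleton_of_mem hdJ]; omega
        obtain ⟨z, hzJ, hzx⟩ := Set.exists_ne_of_one_lt_ncard hz x
        refine arc_no_isolated (harc d hdJ) hxd hzJ hzx ?_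
        intro w hw hadj
        have : w ∈ N x := ⟨hw.1, hadj⟩
        rw [hemp] at this
        exact this
      · -- x has a unique neighbour a; x is isolated in J \ {a}
        have hNa : N x = {a} := by
          refine Set.eq_singleton_iff_unique_mem.mpr ⟨ha, fun b hb => ?_⟩
          by_contra hba
          have : 1 < (N x).ncard :=
            (Set.one_lt_ncard_iff (hNfin x)).mpr ⟨b, a, hb, ha, hba⟩
          omega
        have haJ : a ∈ J := (hNsub x) ha
        have hax : x ≠ a := ha.2.1
        have hxa : x ∈ J \ {a} := ⟨hx, by simp [hax]⟩
        have hz : 1 < (J \ {a}).ncard := by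
          rw [Set.ncard_diff_singleton_of_mem haJ]; omega
        obtain ⟨z, hzJ, hzx⟩ := Set.exists_ne_of_one_lt_ncard hz x
        refine arc_no_isolated (harc a haJ) hxa hzJ hzx ?_
        intro w hw hadj
        have hwN : w ∈ N x := ⟨hw.1, hadj⟩
        rw [hNa] at hwN
        simp only [mem_singleton_iff] at hwN
        exact hw.2 (by simp [hwN])
    omega
  -- the bipartition: minimal points of J
  set Min : (ℤ × ℤ) → Prop := fun x => ∀ z ∈ J, specLE khalPlane z x → z = x with hMin
  have haux : ∀ x ∈ J, ∀ y ∈ J, x ≠ y → specLE khalPlane x y → Min x ∧ ¬ Min y := by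
    intro x hxJ y hyJ hxy hle
    constructor
    · intro z hzJ hzx
      by_contra hzx'
      have hzy : z ≠ y := fun h => hxy (specLE_plane_antisymm hle (h ▸ hzx))
      exact htri z hzJ x hxJ y hyJ hzx' hzy hxy
        ⟨hzx', Or.inl hzx⟩ ⟨hzy, Or.inl (specLE_trans hzx hle)⟩ ⟨hxy, Or.inl hle⟩
    · intro hMy; exact hxy (hMy x hxJ hle)
  have hedge : ∀ x ∈ J, ∀ y ∈ J, Adjacent khalPlane x y → (Min x ↔ ¬ Min y) := by
    intro x hxJ y hyJ hadj
    rcases hadj.2 with h' | h'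
    · have := haux x hxJ y hyJ hadj.1 h'
      exact ⟨fun _ => this.2, fun _ => this.1⟩
    · have := haux y hyJ x hxJ hadj.1.symm h'
      exact ⟨fun hMx => absurd hMx this.2, fun hnMy => absurd this.1 hnMy⟩
  -- double counting
  set JF := hfin.toFinset with hJF
  have hmemJF : ∀ x, x ∈ JF ↔ x ∈ J := fun x => hfin.mem_toFinset
  have hdegF : ∀ x ∈ J, (JF.filter (fun y => Adjacent khalPlane x y)).card = 2 := by
    intro x hx
    have hcoe : ((JF.filter (fun y => Adjacent khalPlane x y)) : Set (ℤ × ℤ)) = N x := by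
      ext y
      simp only [Finset.coe_filter, mem_setOf_eq, hmemJF, hN, mem_sep_iff]
    rw [← Set.ncard_coe_finset, hcoe, hdeg x hx]
  set AF := JF.filter (fun x => Min x) with hAF
  set BF := JF.filter (fun x => ¬ Min x) with hBF
  set E := (JF ×ˢ JF).filter (fun p => Adjacent khalPlane p.1 p.2 ∧ Min p.1) with hE
  have hcard1 : E.card = 2 * AF.card := by
    rw [Finset.card_eq_sum_card_fiberwise
      (f := Prod.fst) (t := AF) ?hmemf]
    case hmemf =>
      intro p hp
      simp only [hE, Finset.mem_coe, Finset.mem_filter, Finset.mem_product] at hp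
      simp only [hAF, Finset.mem_coe, Finset.mem_filter]
      exact ⟨hp.1.1, hp.2.2⟩
    rw [Finset.sum_congr rfl (g := fun _ => 2) ?fib]
    case fib =>
      intro x hxA
      simp only [hAF, Finset.mem_filter] at hxA
      have hxJ : x ∈ J := (hmemJF x).mp hxA.1
      have himg : E.filter (fun p => p.1 = x) =
          (JF.filter (fun y => Adjacent khalPlane x y)).image (fun y => (x, y)) := by
        ext ⟨u, v⟩
        simp only [hE, Finset.mem_filter, Finset.mem_product, Finset.mem_image,
          Prod.mk.injEq]
        constructor
        · rintro ⟨⟨⟨huJ, hvJ⟩, hadj, _⟩, rfl⟩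
          exact ⟨v, ⟨hvJ, hadj⟩, rfl, rfl⟩
        · rintro ⟨y, ⟨hyJ, hadj⟩, rfl, rfl⟩
          exact ⟨⟨⟨hxA.1, hyJ⟩, hadj, hxA.2⟩, rfl⟩
      rw [himg, Finset.card_image_of_injective _ (fun u v huv => by
        simpa using congrArg Prod.snd huv)]
      exact hdegF x hxJ
    rw [Finset.sum_const, smul_eq_mul, mul_comm]
  have hcard2 : E.card = 2 * BF.card := by
    rw [Finset.card_eq_sum_card_fiberwise
      (f := Prod.snd) (t := BF) ?hmemf]
    case hmemf =>
      intro p hp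
      simp only [hE, Finset.mem_coe, Finset.mem_filter, Finset.mem_product] at hp
      simp only [hBF, Finset.mem_coe, Finset.mem_filter]
      refine ⟨hp.1.2, ?_⟩
      have := hedge p.1 ((hmemJF _).mp hp.1.1) p.2 ((hmemJF _).mp hp.1.2) hp.2.1
      exact this.mp hp.2.2
    rw [Finset.sum_congr rfl (g := fun _ => 2) ?fib]
    case fib =>
      intro y hyB
      simp only [hBF, Finset.mem_filter] at hyB
      have hyJ : y ∈ J := (hmemJF y).mp hyB.1
      have himg : E.filter (fun p => p.2 = y) =
          (JF.filter (fun x => Adjacent khalPlane y x)).image (fun x => (x, y)) := by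
        ext ⟨u, v⟩
        simp only [hE, Finset.mem_filter, Finset.mem_product, Finset.mem_image,
          Prod.mk.injEq]
        constructor
        · rintro ⟨⟨⟨huJ, hvJ⟩, hadj, _⟩, rfl⟩
          exact ⟨u, ⟨huJ, adjacent_symm hadj⟩, rfl, rfl⟩
        · rintro ⟨w, ⟨hwJ, hadj⟩, rfl, rfl⟩
          have hMw : Min w :=
            ((hedge w ((hmemJF w).mp hwJ) y hyJ (adjacent_symm hadj)).mpr hyB.2)
          exact ⟨⟨⟨hwJ, hyB.1⟩, adjacent_symm hadj, hMw⟩, rfl⟩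
      rw [himg, Finset.card_image_of_injective _ (fun u v huv => by
        simpa using congrArg Prod.fst huv)]
      exact hdegF y hyJ
    rw [Finset.sum_const, smul_eq_mul, mul_comm]
  have hsum : AF.card + BF.card = JF.card :=
    Finset.card_filter_add_card_filter_not (p := fun x => Min x)
  have hcardJ : J.ncard = JF.card := Set.ncard_eq_toFinset_card J hfin
  rw [hcardJ]
  exact ⟨AF.card, by omega⟩
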